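/- Let G be a torsionless abelian group of infinite rank (i.e., G embeds in a product of copies of ℤ, equivalently Hom(G, ℤ) separates points of G), let z be a rational number, and let σ be a homomorphism from G into its divisible hull (G ⊗ ℚ) whose image has finite rank. If the map g ↦ z·g + σ(g) sends G into (the image of) G, then z is an integer. -/

import Mathlib

open TensorProduct

namespace Stmt2Aux

variable {G : Type*} [AddCommGroup G]

noncomputable def EE (φ : G →+ ℤ) : ℚ ⊗[ℤ] G →ₗ[ℚ] ℚ :=
  LinearMap.liftBaseChange ℚ ((Int.castAddHom ℚ).comp φ).toIntLinearMap

lemma EE_tmul (φ : G →+ ℤ) (q : ℚ) (g : G) : EE φ (q ⊗ₜ[ℤ] g) = q * (φ g : ℚ) := by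
  simp [EE, LinearMap.liftBaseChange_tmul, smul_eq_mul]

lemma EE_one (φ : G →+ ℤ) (g : G) : EE φ ((1:ℚ) ⊗ₜ[ℤ] g) = (φ g : ℚ) := by
  simp [EE_tmul]

lemma EE_add (φ₁ φ₂ : G →+ ℤ) : EE (φ₁ + φ₂) = EE φ₁ + EE φ₂ := by
  apply LinearMap.ext; intro x
  induction x using TensorProduct.induction_on with
  | zero => simp
  | tmul q g => simp only [EE_tmul, LinearMap.add_apply, AddMonoidHom.add_apply]; push_cast; ring
  | add x y hx hy => simp_all [map_add]

lemma EE_zero : EE (0 : G →+ ℤ) = 0 := by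
  apply LinearMap.ext; intro x
  induction x using TensorProduct.induction_on with
  | zero => simp
  | tmul q g => simp [EE_tmul]
  | add x y hx hy => simp_all [map_add]

noncomputable def EEh : (G →+ ℤ) →+ (ℚ ⊗[ℤ] G →ₗ[ℚ] ℚ) where
  toFun := EE
  map_zero' := EE_zero
  map_add' := EE_add

lemma clear_denom (x : ℚ ⊗[ℤ] G) :
    ∃ (m : ℤ) (g : G), m ≠ 0 ∧ (m:ℚ) • x = (1:ℚ) ⊗ₜ[ℤ] g := by
  induction x using TensorProduct.induction_on with
  | zero => exact ⟨1, 0, one_ne_zero, by simp⟩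
  | tmul q g =>
    refine ⟨(q.den : ℤ), q.num • g, by exact_mod_cast q.den_ne_zero, ?_⟩
    have h1 : ((q.den : ℤ) : ℚ) • (q ⊗ₜ[ℤ] g) = ((q.den : ℚ) * q) ⊗ₜ[ℤ] g := by
      rw [smul_tmul', smul_eq_mul]; norm_num
    have h2 : (q.den : ℚ) * q = (q.num : ℚ) := by
      rw [mul_comm]; exact_mod_cast q.mul_den_eq_num
    have h3 : ((q.num : ℚ)) ⊗ₜ[ℤ] g = (1:ℚ) ⊗ₜ[ℤ] (q.num • g) := by
      rw [← smul_tmul]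
      norm_num [zsmul_eq_mul]
    rw [h1, h2, h3]
  | add x y hx hy =>
    obtain ⟨m₁, g₁, hm₁, h₁⟩ := hx
    obtain ⟨m₂, g₂, hm₂, h₂⟩ := hy
    refine ⟨m₁ * m₂, m₂ • g₁ + m₁ • g₂, mul_ne_zero hm₁ hm₂, ?_⟩
    have key : ∀ (m : ℤ) (g : G), (m:ℚ) • ((1:ℚ) ⊗ₜ[ℤ] g) = (1:ℚ) ⊗ₜ[ℤ] (m • g) := by
      intro m g
      rw [smul_tmul', smul_eq_mul, mul_one, show ((m:ℚ)) = m • (1:ℚ) by simp [zsmul_eq_mul],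
        smul_tmul]
    have step : ((m₁ * m₂ : ℤ):ℚ) • (x + y) = (m₂:ℚ) • ((m₁:ℚ) • x) + (m₁:ℚ) • ((m₂:ℚ) • y) := by
      push_cast
      rw [smul_add, ← mul_smul, ← mul_smul, mul_comm (m₁:ℚ) (m₂:ℚ)]
    rw [step, h₁, h₂, key, key, tmul_add]

lemma separate (h : ∀ g : G, g ≠ 0 → ∃ φ : G →+ ℤ, φ g ≠ 0) (x : ℚ ⊗[ℤ] G) (hx : x ≠ 0) :
    ∃ φ : G →+ ℤ, EE φ x ≠ 0 := by
  obtain ⟨m, g, hm, hmx⟩ := clear_denom x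
  have hmQ : (m : ℚ) ≠ 0 := Int.cast_ne_zero.mpr hm
  have hg : g ≠ 0 := by
    rintro rfl
    rw [TensorProduct.tmul_zero] at hmx
    exact hx (by simpa [hmQ] using (smul_eq_zero.mp hmx).resolve_left hmQ)
  obtain ⟨φ, hφ⟩ := h g hg
  refine ⟨φ, fun h0 => hφ ?_⟩
  have := congrArg (EE φ) hmx
  rw [map_smul, h0, smul_zero, EE_one] at this
  exact_mod_cast this.symm

end Stmt2Aux

lemma int_of_pow_mul_int (z : ℚ) (k : ℤ) (hk : k ≠ 0)
    (h : ∀ n : ℕ, ∃ j : ℤ, (j:ℚ) = z ^ n * k) : ∃ m : ℤ, (m:ℚ) = z := by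
  refine ⟨z.num, (Rat.den_eq_one_iff z).mp ?_⟩
  by_contra hden
  have h2 : 2 ≤ z.den := by
    have := z.pos
    omega
  set n := k.natAbs with hn
  obtain ⟨j, hj⟩ := h n
  have hq : (j : ℚ) * (z.den:ℚ)^n = (z.num:ℚ)^n * k := by
    rw [hj]
    have hz : (z.num:ℚ) = z * z.den := by exact_mod_cast z.mul_den_eq_num.symm
    rw [hz, mul_pow]; ring
  have hZ : z.num ^ n * k = (z.den:ℤ)^n * j := by
    have : ((z.num ^ n * k : ℤ) : ℚ) = (((z.den:ℤ)^n * j : ℤ) : ℚ) := by push_cast; rw [← hq]; ring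
    exact_mod_cast this
  have hdvd : ((z.den:ℤ))^n ∣ z.num^n * k := ⟨j, hZ⟩
  have hcop : IsCoprime ((z.den:ℤ)^n) (z.num^n) := by
    rw [Int.isCoprime_iff_gcd_eq_one]
    have hr : Nat.Coprime z.den z.num.natAbs := z.reduced.symm
    have := Nat.Coprime.pow n n hr
    simpa [Int.gcd, Int.natAbs_pow] using this
  have hdvdk : ((z.den:ℤ))^n ∣ k := by
    refine hcop.dvd_of_dvd_mul_right ?_
    rwa [mul_comm] at hdvd
  have hle : ((z.den:ℤ))^n ≤ |k| := Int.le_of_dvd (abs_pos.mpr hk) ((dvd_abs _ _).mpr hdvdk)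
  have h2n : (2:ℤ)^n ≤ (z.den:ℤ)^n := pow_le_pow_left₀ (by norm_num) (by exact_mod_cast h2) n
  have hlt : (n:ℤ) < 2^n := by exact_mod_cast Nat.lt_two_pow_self (n := n)
  have habs : |k| = (n:ℤ) := by rw [hn]; exact_mod_cast (Int.abs_eq_natAbs k)
  omega

set_option synthInstance.maxHeartbeats 1000000 in
open Stmt2Aux in
open TensorProduct in
theorem stmt2 {G : Type*} [AddCommGroup G]
    (htorsionless : ∀ g : G, g ≠ 0 → ∃ φ : G →+ ℤ, φ g ≠ 0)
    (hrank : Cardinal.aleph0 ≤ Module.rank ℚ (ℚ ⊗[ℤ] G))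
    (z : ℚ) (σ : G →+ ℚ ⊗[ℤ] G)
    (hσ : Module.rank ℚ (Submodule.span ℚ (Set.range σ)) < Cardinal.aleph0)
    (hmaps : ∀ g : G, ∃ g' : G, z • ((1:ℚ) ⊗ₜ[ℤ] g) + σ g = (1:ℚ) ⊗ₜ[ℤ] g') :
    ∃ n : ℤ, (n : ℚ) = z := by
  classical
  set V : Submodule ℚ (ℚ ⊗[ℤ] G) := Submodule.span ℚ (Set.range σ) with hV
  haveI : Module.Finite ℚ V := Module.rank_lt_aleph0_iff.mp hσ
  set S : Set (V →ₗ[ℚ] ℚ) := Set.range (fun φ : G →+ ℤ => (EE φ).domRestrict V) with hS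
  obtain ⟨b, hbS, hspan, hli⟩ := exists_linearIndependent ℚ S
  have hbfin : b.Finite := hli.setFinite
  haveI := hbfin.fintype
  have hcex : ∀ y : b, ∃ φ : G →+ ℤ, (EE φ).domRestrict V = (y : V →ₗ[ℚ] ℚ) := fun y => hbS y.2
  choose c hc using hcex
  -- a nonzero element in the intersection of the kernels
  have hN : (⨅ y : b, LinearMap.ker (EE (c y))) ≠ ⊥ := by
    intro hbot
    have hinj : Function.Injective (LinearMap.pi fun y : b => EE (c y)) := by
      rw [← LinearMap.ker_eq_bot, LinearMap.ker_pi]; exact hbot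
    exact absurd
      (hrank.trans ((LinearMap.pi fun y : b => EE (c y)).rank_le_of_injective hinj))
      (Module.rank_lt_aleph0 ℚ (b → ℚ)).not_ge
  obtain ⟨x, hxN, hx0⟩ := Submodule.ne_bot_iff _ |>.mp hN
  have hxker : ∀ y : b, EE (c y) x = 0 := fun y =>
    (Submodule.mem_iInf _).mp hxN y
  obtain ⟨φ, hφx⟩ := separate htorsionless x hx0
  -- express the restriction of φ as a combination of the chosen functionals
  have hmem : (EE φ).domRestrict V ∈ Submodule.span ℚ b := by
    rw [hspan]; exact Submodule.subset_span ⟨φ, rfl⟩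
  rw [Submodule.mem_span_set'] at hmem
  obtain ⟨n, a, y, hsum⟩ := hmem
  -- common denominator
  set d : ℤ := ∏ i : Fin n, ((a i).den : ℤ) with hd
  have hd0 : d ≠ 0 := Finset.prod_ne_zero_iff.mpr fun i _ => by
    exact_mod_cast (a i).den_ne_zero
  have heex : ∀ i : Fin n, ∃ e : ℤ, (e : ℚ) = (d:ℚ) * a i := by
    intro i
    obtain ⟨u, hu⟩ := Finset.dvd_prod_of_mem (fun i => ((a i).den : ℤ)) (Finset.mem_univ i)
    refine ⟨u * (a i).num, ?_⟩
    have hnum : ((a i).den : ℚ) * a i = ((a i).num : ℚ) := by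
      rw [mul_comm]; exact_mod_cast (a i).mul_den_eq_num
    rw [hd, hu]
    push_cast
    rw [mul_comm (((a i).den : ℕ) : ℚ) ((u:ℤ):ℚ), mul_assoc, hnum]
  choose e he using heex
  -- the integer functional annihilating V
  set ψ : G →+ ℤ := d • φ - ∑ i : Fin n, e i • c (y i) with hψ
  have hEEψ : ∀ w : ℚ ⊗[ℤ] G,
      EE ψ w = (d:ℚ) * EE φ w - ∑ i : Fin n, (e i : ℚ) * EE (c (y i)) w := by
    intro w
    have h1 : EE ψ = EEh ψ := rfl
    rw [h1, hψ, map_sub, map_zsmul, map_sum]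
    simp only [LinearMap.sub_apply, LinearMap.smul_apply, map_zsmul,
      LinearMap.coe_sum, Finset.sum_apply, zsmul_eq_mul]
    norm_num [EEh]
  have hψV : ∀ w ∈ V, EE ψ w = 0 := by
    intro w hw
    have happ := congrFun (congrArg (fun (f : V →ₗ[ℚ] ℚ) => (f : V → ℚ)) hsum) ⟨w, hw⟩
    simp only [LinearMap.coe_sum, Finset.sum_apply, LinearMap.smul_apply,
      LinearMap.domRestrict_apply] at happ
    -- happ : ∑ i, a i • ((y i : V →ₗ[ℚ] ℚ) ⟨w, hw⟩) = (EE φ).domRestrict V ⟨w, hw⟩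
    have hyi : ∀ i : Fin n, ((y i : V →ₗ[ℚ] ℚ)) ⟨w, hw⟩ = EE (c (y i)) w := by
      intro i
      rw [← hc (y i)]
      rfl
    have hres : EE φ w = ∑ i : Fin n, a i * EE (c (y i)) w := by
      rw [← happ]
      refine Finset.sum_congr rfl fun i _ => ?_
      rw [hyi i, smul_eq_mul]
    rw [hEEψ w, hres, Finset.mul_sum, ← Finset.sum_sub_distrib]
    refine Finset.sum_eq_zero fun i _ => ?_
    rw [← mul_assoc, ← he i]
    ring
  have hψx : EE ψ x ≠ 0 := by
    rw [hEEψ x]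
    have : ∀ i : Fin n, EE (c (y i)) x = 0 := fun i => hxker (y i)
    simp only [this, mul_zero, Finset.sum_const_zero, sub_zero]
    exact mul_ne_zero (Int.cast_ne_zero.mpr hd0) hφx
  -- a group element on which ψ does not vanish
  obtain ⟨m, g0, hm, hmg⟩ := clear_denom x
  have hk : (ψ g0 : ℚ) = (m:ℚ) * EE ψ x := by
    rw [← EE_one ψ g0, ← hmg, map_smul, smul_eq_mul]
  have hk0 : ψ g0 ≠ 0 := by
    intro h0
    rw [h0] at hk
    exact (mul_ne_zero (Int.cast_ne_zero.mpr hm) hψx) (by exact_mod_cast hk.symm)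
  -- the iteration
  choose s hs using hmaps
  have key : ∀ N : ℕ, (ψ (s^[N] g0) : ℚ) = z ^ N * (ψ g0 : ℚ) := by
    intro N
    induction N with
    | zero => simp
    | succ N ih =>
      rw [Function.iterate_succ_apply']
      have h1 : ((ψ (s (s^[N] g0)) : ℤ) : ℚ) = EE ψ ((1:ℚ) ⊗ₜ[ℤ] (s (s^[N] g0))) :=
        (EE_one ψ _).symm
      rw [h1, ← hs (s^[N] g0), map_add, map_smul, EE_one,
        hψV _ (Submodule.subset_span (Set.mem_range_self _)), add_zero, smul_eq_mul, ih,
        pow_succ]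
      ring
  exact int_of_pow_mul_int z (ψ g0) hk0 fun N => ⟨ψ (s^[N] g0), key N⟩
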